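/- Let J_A, J_B : ℝ^n → ℝ^n be firmly nonexpansive, let C : ℝ^n → ℝ^n be β-cocoercive for some β > 0, and let γ ∈ (0, 2β). Then the Davis–Yin operator T_DY = Id − J_B + J_A ∘ (2J_B − Id − γ C ∘ J_B) is α-averaged with α = 2β/(4β − γ) ∈ (0,1); that is, there exists a nonexpansive map R_DY : ℝ^n → ℝ^n with T_DY = (1−α)Id + αR_DY. -/

import Mathlib

variable {E : Type*} [NormedAddCommGroup E] [InnerProductSpace ℝ E]

/-- Key Davis–Yin inequality (multiplied through by `2β`). -/
lemma dy_key (β γ : ℝ) (hβ : 0 < β) (hγ0 : 0 < γ) (hγ : γ < 2 * β)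
    (d b a c : E)
    (h1 : (inner ℝ b d : ℝ) ≥ ‖b‖ ^ 2)
    (h2 : (inner ℝ a ((2 : ℝ) • b - d - γ • c) : ℝ) ≥ ‖a‖ ^ 2)
    (h3 : (inner ℝ b c : ℝ) ≥ β * ‖c‖ ^ 2) :
    2*β*‖d - b + a‖ ^ 2 + (2*β - γ) * ‖b - a‖ ^ 2 ≤ 2*β*‖d‖ ^ 2 := by
  have hy : (0:ℝ) ≤ ‖(b - a) - (2 * β) • c‖ ^ 2 := sq_nonneg _
  have e1 : ‖d - b + a‖ ^ 2 = ‖d‖^2 + ‖b‖^2 + ‖a‖^2 - 2*(inner ℝ b d : ℝ)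
      + 2*(inner ℝ a d : ℝ) - 2*(inner ℝ a b : ℝ) := by
    rw [← real_inner_self_eq_norm_sq, ← real_inner_self_eq_norm_sq,
      ← real_inner_self_eq_norm_sq, ← real_inner_self_eq_norm_sq]
    simp [inner_sub_left, inner_sub_right, inner_add_left, inner_add_right,
      real_inner_comm d b, real_inner_comm d a, real_inner_comm b a, -inner_self_eq_norm_sq_to_K]
    ring
  have e2 : ‖b - a‖ ^ 2 = ‖b‖^2 + ‖a‖^2 - 2*(inner ℝ a b : ℝ) := by
    rw [← real_inner_self_eq_norm_sq, ← real_inner_self_eq_norm_sq,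
      ← real_inner_self_eq_norm_sq]
    simp [inner_sub_left, inner_sub_right, real_inner_comm b a, -inner_self_eq_norm_sq_to_K]
    ring
  have e3 : ‖(b - a) - (2 * β) • c‖ ^ 2 = ‖b - a‖^2 - 2*(2*β)*((inner ℝ b c : ℝ) - (inner ℝ a c : ℝ))
      + (2*β)^2*‖c‖^2 := by
    rw [← real_inner_self_eq_norm_sq, ← real_inner_self_eq_norm_sq, ← real_inner_self_eq_norm_sq]
    simp [inner_sub_left, inner_sub_right, inner_smul_left, inner_smul_right,
      real_inner_comm c b, real_inner_comm c a, -inner_self_eq_norm_sq_to_K]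
    ring
  have h2' : (inner ℝ a ((2 : ℝ) • b - d - γ • c) : ℝ)
      = 2*(inner ℝ a b : ℝ) - (inner ℝ a d : ℝ) - γ*(inner ℝ a c : ℝ) := by
    simp [inner_sub_right, inner_smul_right]
  rw [h2'] at h2
  rw [e3, e2] at hy
  have hm1 := mul_le_mul_of_nonneg_left h1 (by linarith : (0:ℝ) ≤ 2*β)
  have hm2 := mul_le_mul_of_nonneg_left h2 (by linarith : (0:ℝ) ≤ 2*β)
  have hm3 := mul_le_mul_of_nonneg_left h3 (by positivity : (0:ℝ) ≤ 2*β*γ)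
  have hmy := mul_le_mul_of_nonneg_left hy (le_of_lt hγ0)
  rw [e1, e2]
  nlinarith [hm1, hm2, hm3, hmy]

/-- Averagedness from the contraction inequality. -/
lemma dy_avg (k : ℝ) (hk : 1 ≤ k) (d t : E)
    (key : ‖t‖ ^ 2 + (k - 1) * ‖d - t‖ ^ 2 ≤ ‖d‖ ^ 2) :
    ‖(1 - k) • d + k • t‖ ≤ ‖d‖ := by
  have e1 : ‖(1 - k) • d + k • t‖ ^ 2
      = (1-k)^2*‖d‖^2 + 2*k*(1-k)*(inner ℝ d t : ℝ) + k^2*‖t‖^2 := by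
    rw [← real_inner_self_eq_norm_sq, ← real_inner_self_eq_norm_sq, ← real_inner_self_eq_norm_sq]
    simp [inner_add_left, inner_add_right, inner_smul_left, inner_smul_right,
      real_inner_comm t d, -inner_self_eq_norm_sq_to_K]
    ring
  have e2 : ‖d - t‖ ^ 2 = ‖d‖^2 - 2*(inner ℝ d t : ℝ) + ‖t‖^2 := by
    rw [← real_inner_self_eq_norm_sq, ← real_inner_self_eq_norm_sq, ← real_inner_self_eq_norm_sq]
    simp [inner_sub_left, inner_sub_right, real_inner_comm t d, -inner_self_eq_norm_sq_to_K]
    ring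
  have hsq : ‖(1 - k) • d + k • t‖ ^ 2 ≤ ‖d‖ ^ 2 := by
    rw [e2] at key
    have := mul_le_mul_of_nonneg_left key (by linarith : (0:ℝ) ≤ k)
    nlinarith [this]
  nlinarith [norm_nonneg ((1 - k) • d + k • t), norm_nonneg d, hsq]

/-- Averagedness of the Davis–Yin operator: if `J_A, J_B` are
firmly nonexpansive, `C` is `β`-cocoercive, and `γ ∈ (0, 2β)`, then
`T_DY = Id - J_B + J_A ∘ (2 J_B - Id - γ C ∘ J_B)` is `α`-averaged with
`α = 2β/(4β - γ) ∈ (0,1)`, i.e. `T_DY = (1-α) Id + α R_DY` with `R_DY` nonexpansive. -/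
theorem davis_yin_operator_averaged
    {n : ℕ} (JA JB C : EuclideanSpace ℝ (Fin n) → EuclideanSpace ℝ (Fin n))
    (hJA : ∀ x y, (inner ℝ (JA x - JA y) (x - y) : ℝ) ≥ ‖JA x - JA y‖ ^ 2)
    (hJB : ∀ x y, (inner ℝ (JB x - JB y) (x - y) : ℝ) ≥ ‖JB x - JB y‖ ^ 2)
    (β : ℝ) (hβ : 0 < β)
    (hC : ∀ x y, (inner ℝ (x - y) (C x - C y) : ℝ) ≥ β * ‖C x - C y‖ ^ 2)
    (γ : ℝ) (hγ0 : 0 < γ) (hγ2β : γ < 2 * β) :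
    (0 < 2 * β / (4 * β - γ) ∧ 2 * β / (4 * β - γ) < 1) ∧
      ∃ RDY : EuclideanSpace ℝ (Fin n) → EuclideanSpace ℝ (Fin n),
        (∀ x y, ‖RDY x - RDY y‖ ≤ ‖x - y‖) ∧
        ∀ z, z - JB z + JA ((2 : ℝ) • JB z - z - γ • C (JB z)) =
          (1 - 2 * β / (4 * β - γ)) • z + (2 * β / (4 * β - γ)) • RDY z := by
  have h4 : (0:ℝ) < 4 * β - γ := by linarith
  have h2b : (0:ℝ) < 2 * β := by linarith
  set k : ℝ := (4 * β - γ) / (2 * β) with hkdef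
  have hk : 1 ≤ k := by rw [hkdef, le_div_iff₀ h2b]; linarith
  refine ⟨⟨by positivity, by rw [div_lt_one h4]; linarith⟩, ?_⟩
  refine ⟨fun z => (1 - k) • z + k • (z - JB z + JA ((2 : ℝ) • JB z - z - γ • C (JB z))), ?_, ?_⟩
  · intro x y
    set u := (2 : ℝ) • JB x - x - γ • C (JB x) with hu
    set v := (2 : ℝ) • JB y - y - γ • C (JB y) with hv
    set d := x - y
    set b := JB x - JB y
    set a := JA u - JA v
    set c := C (JB x) - C (JB y)
    have h1 : (inner ℝ b d : ℝ) ≥ ‖b‖ ^ 2 := hJB x y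
    have h3 : (inner ℝ b c : ℝ) ≥ β * ‖c‖ ^ 2 := hC (JB x) (JB y)
    have huv : u - v = (2 : ℝ) • b - d - γ • c := by
      simp only [hu, hv]; module
    have h2 : (inner ℝ a ((2 : ℝ) • b - d - γ • c) : ℝ) ≥ ‖a‖ ^ 2 := by
      rw [← huv]; exact hJA u v
    have hkey0 := dy_key β γ hβ hγ0 hγ2β d b a c h1 h2 h3
    set t := d - b + a with ht
    have hdt : d - t = b - a := by rw [ht]; module
    have key : ‖t‖ ^ 2 + (k - 1) * ‖d - t‖ ^ 2 ≤ ‖d‖ ^ 2 := by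
      rw [hdt]
      have hk1 : k - 1 = (2 * β - γ) / (2 * β) := by
        rw [hkdef]; field_simp; ring
      rw [hk1]
      rw [div_mul_eq_mul_div, ← sub_nonneg]
      have : ‖d‖ ^ 2 - ((‖t‖:ℝ) ^ 2 + (2 * β - γ) * ‖b - a‖ ^ 2 / (2 * β))
          = (2*β*‖d‖^2 - (2*β*‖t‖^2 + (2*β-γ)*‖b-a‖^2)) / (2*β) := by
        field_simp
      rw [this]
      apply div_nonneg _ (le_of_lt h2b)
      rw [ht]; linarith
    have havg := dy_avg k hk d t key
    have hR : ((1 - k) • x + k • (x - JB x + JA u)) - ((1 - k) • y + k • (y - JB y + JA v))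
        = (1 - k) • d + k • t := by
      simp only [ht]; show _ = (1-k) • (x - y) + k • ((x-y) - (JB x - JB y) + (JA u - JA v))
      module
    rw [hR]
    exact havg
  · intro z
    have hαk : (2 * β / (4 * β - γ)) * k = 1 := by
      rw [hkdef]
      field_simp
      exact div_self (by linarith)
    have hco : (1 - 2 * β / (4 * β - γ)) + (2 * β / (4 * β - γ)) * (1 - k) = 0 := by
      linear_combination -hαk
    set w := z - JB z + JA ((2 : ℝ) • JB z - z - γ • C (JB z)) with hw
    calc w = (0:ℝ) • z + (1:ℝ) • w := by simp
      _ = ((1 - 2 * β / (4 * β - γ)) + (2 * β / (4 * β - γ)) * (1 - k)) • z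
            + ((2 * β / (4 * β - γ)) * k) • w := by rw [hco, hαk]
      _ = (1 - 2 * β / (4 * β - γ)) • z + (2 * β / (4 * β - γ)) • ((1 - k) • z + k • w) := by
            module
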